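/- Let p be a prime and Ω ⊂ ℚ_p a Borel set with 0 < m(Ω) < ∞. If (Ω, T) is a tiling pair, i.e. ∑_{t∈T} 1_Ω(x - t) = 1 for almost every x ∈ ℚ_p, then T is uniformly discrete: there exists n₀ ∈ ℤ such that |t - t'|_p > p^{n₀} for all distinct t, t' ∈ T. -/

import Mathlib

open MeasureTheory Pointwise

noncomputable instance (p : ℕ) [Fact p.Prime] : MeasurableSpace ℚ_[p] := borel _
instance (p : ℕ) [Fact p.Prime] : BorelSpace ℚ_[p] := ⟨rfl⟩

/-- Haar measure on `ℚ_[p]`, normalized so that `ℤ_p` (the closed unit ball) has measure 1. -/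
noncomputable def haarQp (p : ℕ) [Fact p.Prime] : Measure ℚ_[p] :=
  Measure.addHaarMeasure
    ⟨⟨Metric.closedBall 0 1, isCompact_closedBall 0 1⟩,
      ⟨0, by
        rw [mem_interior_iff_mem_nhds]
        exact Metric.closedBall_mem_nhds 0 one_pos⟩⟩

/-- If `(Ω, T)` is a tiling pair in `ℚ_p`, then `T` is uniformly discrete. -/
theorem stmt11 (p : ℕ) [Fact p.Prime] (Ω : Set ℚ_[p]) (hΩ : MeasurableSet Ω)
    (h0 : 0 < haarQp p Ω) (hfin : haarQp p Ω < ⊤) (T : Set ℚ_[p])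
    (htile : ∀ᵐ x ∂(haarQp p),
      ∑' t : T, Set.indicator Ω (fun _ => (1 : ℝ)) (x - t) = 1) :
    ∃ n₀ : ℤ, ∀ t ∈ T, ∀ t' ∈ T, t ≠ t' → (p : ℝ) ^ n₀ < ‖t - t'‖ := by
  haveI hIR : Measure.InnerRegular (haarQp p) := by unfold haarQp; infer_instance
  haveI hLI : Measure.IsAddLeftInvariant (haarQp p) := by unfold haarQp; infer_instance
  haveI hFC : IsFiniteMeasureOnCompacts (haarQp p) := by unfold haarQp; infer_instance
  haveI hICT : Measure.InnerRegularCompactLTTop (haarQp p) := by unfold haarQp; infer_instance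
  -- Step 1: for distinct t, t' in T, the set Ω ∩ ((t - t') +ᵥ Ω) is null.
  have key : ∀ t ∈ T, ∀ t' ∈ T, t ≠ t' →
      haarQp p (Ω ∩ ((t - t') +ᵥ Ω)) = 0 := by
    intro t ht t' ht' hne
    classical
    have hae : ∀ᵐ x ∂(haarQp p), ¬(x ∈ (t +ᵥ Ω) ∧ x ∈ (t' +ᵥ Ω)) := by
      filter_upwards [htile] with x hx
      rintro ⟨h1, h2⟩
      have hm1 : x - t ∈ Ω := by
        rw [Set.mem_vadd_set_iff_neg_vadd_mem] at h1
        simpa [vadd_eq_add, neg_add_eq_sub] using h1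
      have hm2 : x - t' ∈ Ω := by
        rw [Set.mem_vadd_set_iff_neg_vadd_mem] at h2
        simpa [vadd_eq_add, neg_add_eq_sub] using h2
      set f : T → ℝ := fun s => Set.indicator Ω (fun _ => (1 : ℝ)) (x - s) with hf
      have hnonneg : ∀ s, 0 ≤ f s := fun s =>
        Set.indicator_nonneg (fun _ _ => zero_le_one) _
      have hsum : Summable f := by
        by_contra hns
        rw [tsum_eq_zero_of_not_summable hns] at hx
        norm_num at hx
      have hF : ({⟨t, ht⟩, ⟨t', ht'⟩} : Finset T).sum f ≤ ∑' s, f s :=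
        Summable.sum_le_tsum _ (fun s _ => hnonneg s) hsum
      rw [Finset.sum_pair (by simpa using hne)] at hF
      rw [show ∑' s, f s = 1 from hx, Set.indicator_of_mem hm1,
        Set.indicator_of_mem hm2] at hF
      norm_num at hF
    have hnull : haarQp p ((t +ᵥ Ω) ∩ (t' +ᵥ Ω)) = 0 := by
      have : (t +ᵥ Ω) ∩ (t' +ᵥ Ω) ⊆ {x | x ∈ (t +ᵥ Ω) ∧ x ∈ (t' +ᵥ Ω)} := fun x hx => hx
      exact measure_mono_null this (by simpa [not_not] using ae_iff.1 hae)
    have := measure_vadd (haarQp p) (-t') ((t +ᵥ Ω) ∩ (t' +ᵥ Ω))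
    rw [hnull] at this
    have hset : (-t') +ᵥ ((t +ᵥ Ω) ∩ (t' +ᵥ Ω)) = ((t - t') +ᵥ Ω) ∩ Ω := by
      rw [Set.vadd_set_inter, vadd_vadd, vadd_vadd]
      simp [neg_add_eq_sub]
    rw [hset, Set.inter_comm] at this
    exact this
  -- Step 2: compact K ⊆ Ω of positive measure.
  obtain ⟨K, hKΩ, hK, hKpos⟩ : ∃ K ⊆ Ω, IsCompact K ∧ 0 < haarQp p K :=
    hΩ.exists_lt_isCompact h0
  -- Step 3: translations close to 0 almost preserve K.
  have hev : ∀ᶠ g in nhds (0 : ℚ_[p]), haarQp p ((g +ᵥ K) \ K) < haarQp p K :=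
    eventually_nhds_zero_measure_vadd_sdiff_lt hK hK.isClosed hKpos.ne'
  obtain ⟨ε, εpos, hball⟩ := Metric.eventually_nhds_iff.1 hev
  -- Step 4: choose n₀ with p^n₀ < ε.
  have hp1 : (1 : ℝ) < p := by exact_mod_cast (Fact.out : p.Prime).one_lt
  obtain ⟨n, hn⟩ : ∃ n : ℕ, ((p : ℝ)⁻¹) ^ n < ε :=
    exists_pow_lt_of_lt_one εpos (by
      rw [inv_lt_one_iff₀]; right; exact hp1)
  refine ⟨-n, ?_⟩
  intro t ht t' ht' hne
  by_contra hle
  push_neg at hle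
  have hdist : dist (t - t') 0 < ε := by
    rw [dist_zero_right]
    calc ‖t - t'‖ ≤ (p : ℝ) ^ (-n : ℤ) := hle
      _ = ((p : ℝ)⁻¹) ^ n := by rw [zpow_neg, zpow_natCast, inv_pow]
      _ < ε := hn
  have hdiff := hball hdist
  -- positive measure of intersection of K with its translate
  have hKt : haarQp p ((t - t') +ᵥ K) = haarQp p K := measure_vadd _ _ _
  have hsplit : haarQp p ((t - t') +ᵥ K) ≤
      haarQp p (((t - t') +ᵥ K) \ K) + haarQp p (((t - t') +ᵥ K) ∩ K) := by
    conv_lhs => rw [← Set.diff_union_inter ((t - t') +ᵥ K) K]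
    exact measure_union_le _ _
  have hpos : 0 < haarQp p (((t - t') +ᵥ K) ∩ K) := by
    by_contra h
    push_neg at h
    have h0' : haarQp p (((t - t') +ᵥ K) ∩ K) = 0 := le_antisymm h zero_le
    rw [hKt, h0', add_zero] at hsplit
    exact absurd hsplit (not_le.2 hdiff)
  -- but this intersection is inside a null set
  have hsub : ((t - t') +ᵥ K) ∩ K ⊆ Ω ∩ ((t - t') +ᵥ Ω) := by
    rintro x ⟨hx1, hx2⟩
    exact ⟨hKΩ hx2, Set.vadd_set_mono hKΩ hx1⟩
  exact absurd (measure_mono_null hsub (key t ht t' ht' hne)) hpos.ne'
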